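/- For any algebraic curvature tensor T on a Hermitian vector space of complex dimension m, ⟨I_ℂ - I, T⟩ = -6 Scal_ℂ(T), where Scal_ℂ(T) = Σ_{k,l=1}^m T(ζ_k, ζ_l, conj(ζ_k), conj(ζ_l)) is the complexified scalar curvature computed in an orthonormal basis (ζ_k) of the (1,0)-part of the complexified space. -/

import Mathlib

open TensorProduct

set_option linter.unusedSectionVars false
set_option maxHeartbeats 1000000

section Slot4
variable {R : Type*} [CommRing R] {M N : Type*} [AddCommGroup M] [Module R M]
  [AddCommGroup N] [Module R N]
lemma upd4_0 (x y z w v : M) : Function.update ![x,y,z,w] (0 : Fin 4) v = ![v,y,z,w] := by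
  ext i; fin_cases i <;> simp
lemma upd4_1 (x y z w v : M) : Function.update ![x,y,z,w] (1 : Fin 4) v = ![x,v,z,w] := by
  ext i; fin_cases i <;> simp
lemma upd4_2 (x y z w v : M) : Function.update ![x,y,z,w] (2 : Fin 4) v = ![x,y,v,w] := by
  ext i; fin_cases i <;> simp
lemma upd4_3 (x y z w v : M) : Function.update ![x,y,z,w] (3 : Fin 4) v = ![x,y,z,v] := by
  ext i; fin_cases i <;> simp
variable (f : MultilinearMap R (fun _ : Fin 4 => M) N)
lemma m4add0 (x x' y z w : M) : f ![x + x', y, z, w] = f ![x,y,z,w] + f ![x',y,z,w] := by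
  simpa [upd4_0] using f.map_update_add ![x,y,z,w] 0 x x'
lemma m4add1 (x y y' z w : M) : f ![x, y + y', z, w] = f ![x,y,z,w] + f ![x,y',z,w] := by
  simpa [upd4_1] using f.map_update_add ![x,y,z,w] 1 y y'
lemma m4add2 (x y z z' w : M) : f ![x, y, z + z', w] = f ![x,y,z,w] + f ![x,y,z',w] := by
  simpa [upd4_2] using f.map_update_add ![x,y,z,w] 2 z z'
lemma m4add3 (x y z w w' : M) : f ![x, y, z, w + w'] = f ![x,y,z,w] + f ![x,y,z,w'] := by
  simpa [upd4_3] using f.map_update_add ![x,y,z,w] 3 w w'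
lemma m4smul0 (c : R) (x y z w : M) : f ![c • x, y, z, w] = c • f ![x,y,z,w] := by
  simpa [upd4_0] using f.map_update_smul ![x,y,z,w] 0 c x
lemma m4smul1 (c : R) (x y z w : M) : f ![x, c • y, z, w] = c • f ![x,y,z,w] := by
  simpa [upd4_1] using f.map_update_smul ![x,y,z,w] 1 c y
lemma m4smul2 (c : R) (x y z w : M) : f ![x, y, c • z, w] = c • f ![x,y,z,w] := by
  simpa [upd4_2] using f.map_update_smul ![x,y,z,w] 2 c z
lemma m4smul3 (c : R) (x y z w : M) : f ![x, y, z, c • w] = c • f ![x,y,z,w] := by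
  simpa [upd4_3] using f.map_update_smul ![x,y,z,w] 3 c w
lemma m4neg0 (x y z w : M) : f ![-x, y, z, w] = -f ![x,y,z,w] := by
  simpa using m4smul0 f (-1 : R) x y z w
lemma m4neg1 (x y z w : M) : f ![x, -y, z, w] = -f ![x,y,z,w] := by
  simpa using m4smul1 f (-1 : R) x y z w
lemma m4neg2 (x y z w : M) : f ![x, y, -z, w] = -f ![x,y,z,w] := by
  simpa using m4smul2 f (-1 : R) x y z w
lemma m4neg3 (x y z w : M) : f ![x, y, z, -w] = -f ![x,y,z,w] := by
  simpa using m4smul3 f (-1 : R) x y z w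
lemma m4sub0 (x x' y z w : M) : f ![x - x', y, z, w] = f ![x,y,z,w] - f ![x',y,z,w] := by
  rw [sub_eq_add_neg, m4add0, m4neg0, ← sub_eq_add_neg]
lemma m4sub1 (x y y' z w : M) : f ![x, y - y', z, w] = f ![x,y,z,w] - f ![x,y',z,w] := by
  rw [sub_eq_add_neg, m4add1, m4neg1, ← sub_eq_add_neg]
lemma m4sub2 (x y z z' w : M) : f ![x, y, z - z', w] = f ![x,y,z,w] - f ![x,y,z',w] := by
  rw [sub_eq_add_neg, m4add2, m4neg2, ← sub_eq_add_neg]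
lemma m4sub3 (x y z w w' : M) : f ![x, y, z, w - w'] = f ![x,y,z,w] - f ![x,y,z,w'] := by
  rw [sub_eq_add_neg, m4add3, m4neg3, ← sub_eq_add_neg]
end Slot4

/-- For any algebraic curvature tensor `T` on a Hermitian vector space of complex
dimension `m`, `⟨I_ℂ - I, T⟩ = -6 Scal_ℂ(T)`, where
`Scal_ℂ(T) = Σ_{k,l} T(ζ_k, ζ_l, conj ζ_k, conj ζ_l)` is computed from the
`ℂ`-multilinear extension `Tc` of `T` to the complexification `ℂ ⊗[ℝ] V`, in an
orthonormal basis `ζ_k = (e_k - i J e_k)/√2` of the `(1,0)`-part. -/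
theorem inner_IC_sub_I_eq_neg_six_complexified_scalar
    {V : Type*} [NormedAddCommGroup V] [InnerProductSpace ℝ V]
    (m : ℕ) (J : V →ₗ[ℝ] V) (hJ2 : ∀ x, J (J x) = -x)
    (hJiso : ∀ x y : V, (inner ℝ (J x) (J y) : ℝ) = inner ℝ x y)
    (b : OrthonormalBasis (Fin m ⊕ Fin m) ℝ V)
    (hb : ∀ k : Fin m, b (Sum.inr k) = J (b (Sum.inl k)))
    (T : MultilinearMap ℝ (fun _ : Fin 4 => V) ℝ)
    (hT1 : ∀ X Y Z W : V, T ![X, Y, Z, W] = -T ![Y, X, Z, W])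
    (hT2 : ∀ X Y Z W : V, T ![X, Y, Z, W] = -T ![X, Y, W, Z])
    (hT3 : ∀ X Y Z W : V, T ![X, Y, Z, W] = T ![Z, W, X, Y])
    (hTbianchi : ∀ X Y Z W : V,
      T ![X, Y, Z, W] + T ![Y, Z, X, W] + T ![Z, X, Y, W] = 0)
    (Tc : MultilinearMap ℂ (fun _ : Fin 4 => ℂ ⊗[ℝ] V) ℂ)
    (hTc : ∀ v : Fin 4 → V, Tc (fun i => (1 : ℂ) ⊗ₜ[ℝ] v i) = (T v : ℂ)) :
    let g : V → V → ℝ := fun x y => inner ℝ x y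
    let Ifun : V → V → V → V → ℝ := fun X Y Z W => g X Z * g Y W - g Y Z * g X W
    let ICfun : V → V → V → V → ℝ := fun X Y Z W =>
      (4 : ℝ)⁻¹ * (Ifun X Y Z W + Ifun (J X) (J Y) Z W + 2 * g (J X) Y * g (J Z) W)
    let ζ : Fin m → ℂ ⊗[ℝ] V := fun k =>
      ((Real.sqrt 2 : ℂ))⁻¹ •
        ((1 : ℂ) ⊗ₜ[ℝ] b (Sum.inl k) - Complex.I • ((1 : ℂ) ⊗ₜ[ℝ] J (b (Sum.inl k))))
    let ζbar : Fin m → ℂ ⊗[ℝ] V := fun k =>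
      ((Real.sqrt 2 : ℂ))⁻¹ •
        ((1 : ℂ) ⊗ₜ[ℝ] b (Sum.inl k) + Complex.I • ((1 : ℂ) ⊗ₜ[ℝ] J (b (Sum.inl k))))
    ((∑ i, ∑ j, ∑ k, ∑ l,
      (ICfun (b i) (b j) (b k) (b l) - Ifun (b i) (b j) (b k) (b l)) *
        T ![b i, b j, b k, b l] : ℝ) : ℂ) =
      -6 * ∑ k : Fin m, ∑ l : Fin m, Tc ![ζ k, ζ l, ζbar k, ζbar l] := by
  intro g Ifun ICfun ζ ζbar
  -- contraction machinery
  have contract : ∀ (x : V) (L : V →ₗ[ℝ] ℝ),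
      ∑ i, (inner ℝ x (b i) : ℝ) * L (b i) = L x := by
    intro x L
    have hx := b.sum_repr x
    calc ∑ i, (inner ℝ x (b i) : ℝ) * L (b i)
        = ∑ i, L ((b.repr x) i • b i) := by
          refine Finset.sum_congr rfl fun i _ => ?_
          rw [L.map_smul, smul_eq_mul, b.repr_apply_apply, real_inner_comm]
      _ = L (∑ i, (b.repr x) i • b i) := (map_sum L _ _).symm
      _ = L x := by rw [hx]
  have con3 : ∀ (a c d x : V),
      (∑ k, (inner ℝ x (b k) : ℝ) * T ![a, c, b k, d]) = T ![a, c, x, d] := by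
    intro a c d x
    exact contract x
      { toFun := fun z => T ![a, c, z, d]
        map_add' := fun p q => m4add2 T a c p q d
        map_smul' := fun r p => by simpa [smul_eq_mul] using m4smul2 T r a c p d }
  have con4 : ∀ (a c d x : V),
      (∑ l, (inner ℝ x (b l) : ℝ) * T ![a, c, d, b l]) = T ![a, c, d, x] := by
    intro a c d x
    exact contract x
      { toFun := fun z => T ![a, c, d, z]
        map_add' := fun p q => m4add3 T a c d p q
        map_smul' := fun r p => by simpa [smul_eq_mul] using m4smul3 T r a c d p }
  have con2sum : ∀ (a x : V),
      (∑ j, (inner ℝ x (b j) : ℝ) * ∑ k, T ![a, b j, b k, J (b k)])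
        = ∑ k, T ![a, x, b k, J (b k)] := by
    intro a x
    exact contract x
      { toFun := fun z => ∑ k, T ![a, z, b k, J (b k)]
        map_add' := fun p q => by
          simp only [m4add1, Finset.sum_add_distrib]
        map_smul' := fun r p => by
          simp only [m4smul1, smul_eq_mul, RingHom.id_apply, Finset.mul_sum] }
  -- LHS reduction
  have hL : (∑ i, ∑ j, ∑ k, ∑ l,
      (ICfun (b i) (b j) (b k) (b l) - Ifun (b i) (b j) (b k) (b l)) *
        T ![b i, b j, b k, b l])
      = ∑ i, ∑ j, (-(3/4 : ℝ) * T ![b i, b j, b i, b j]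
          + (3/4 : ℝ) * T ![b i, b j, b j, b i]
          + (1/4 : ℝ) * T ![b i, b j, J (b i), J (b j)]
          - (1/4 : ℝ) * T ![b i, b j, J (b j), J (b i)]
          + (1/2 : ℝ) * T ![b i, J (b i), b j, J (b j)]) := by
    refine Finset.sum_congr rfl fun i _ => ?_
    have hjk : ∀ j : Fin m ⊕ Fin m, (∑ k, ∑ l,
        (ICfun (b i) (b j) (b k) (b l) - Ifun (b i) (b j) (b k) (b l)) *
          T ![b i, b j, b k, b l])
        = (-(3/4 : ℝ) * T ![b i, b j, b i, b j]
          + (3/4 : ℝ) * T ![b i, b j, b j, b i]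
          + (1/4 : ℝ) * T ![b i, b j, J (b i), J (b j)]
          - (1/4 : ℝ) * T ![b i, b j, J (b j), J (b i)])
          + ((1/2 : ℝ) * (inner ℝ (J (b i)) (b j) : ℝ)) *
              ∑ k, T ![b i, b j, b k, J (b k)] := by
      intro j
      have hk : ∀ k : Fin m ⊕ Fin m, (∑ l,
          (ICfun (b i) (b j) (b k) (b l) - Ifun (b i) (b j) (b k) (b l)) *
            T ![b i, b j, b k, b l])
          = (-(3/4 : ℝ) * (inner ℝ (b i) (b k) : ℝ)) * T ![b i, b j, b k, b j]
            + ((3/4 : ℝ) * (inner ℝ (b j) (b k) : ℝ)) * T ![b i, b j, b k, b i]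
            + ((1/4 : ℝ) * (inner ℝ (J (b i)) (b k) : ℝ)) * T ![b i, b j, b k, J (b j)]
            + (-(1/4 : ℝ) * (inner ℝ (J (b j)) (b k) : ℝ)) * T ![b i, b j, b k, J (b i)]
            + ((1/2 : ℝ) * (inner ℝ (J (b i)) (b j) : ℝ)) * T ![b i, b j, b k, J (b k)] := by
        intro k
        calc (∑ l, (ICfun (b i) (b j) (b k) (b l) - Ifun (b i) (b j) (b k) (b l)) *
              T ![b i, b j, b k, b l])
            = ∑ l, ((-(3/4 : ℝ) * (inner ℝ (b i) (b k) : ℝ)) *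
                  ((inner ℝ (b j) (b l) : ℝ) * T ![b i, b j, b k, b l])
                + ((3/4 : ℝ) * (inner ℝ (b j) (b k) : ℝ)) *
                  ((inner ℝ (b i) (b l) : ℝ) * T ![b i, b j, b k, b l])
                + ((1/4 : ℝ) * (inner ℝ (J (b i)) (b k) : ℝ)) *
                  ((inner ℝ (J (b j)) (b l) : ℝ) * T ![b i, b j, b k, b l])
                + (-(1/4 : ℝ) * (inner ℝ (J (b j)) (b k) : ℝ)) *
                  ((inner ℝ (J (b i)) (b l) : ℝ) * T ![b i, b j, b k, b l])
                + ((1/2 : ℝ) * (inner ℝ (J (b i)) (b j) : ℝ)) *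
                  ((inner ℝ (J (b k)) (b l) : ℝ) * T ![b i, b j, b k, b l])) := by
              refine Finset.sum_congr rfl fun l _ => ?_
              show (ICfun (b i) (b j) (b k) (b l) - Ifun (b i) (b j) (b k) (b l)) *
                T ![b i, b j, b k, b l] = _
              simp only [ICfun, Ifun, g]
              ring
          _ = _ := by
              simp only [Finset.sum_add_distrib, ← Finset.mul_sum]
              rw [con4 (b i) (b j) (b k) (b j), con4 (b i) (b j) (b k) (b i),
                con4 (b i) (b j) (b k) (J (b j)), con4 (b i) (b j) (b k) (J (b i)),
                con4 (b i) (b j) (b k) (J (b k))]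
      calc (∑ k, ∑ l,
          (ICfun (b i) (b j) (b k) (b l) - Ifun (b i) (b j) (b k) (b l)) *
            T ![b i, b j, b k, b l])
          = ∑ k, ((-(3/4 : ℝ)) * ((inner ℝ (b i) (b k) : ℝ) * T ![b i, b j, b k, b j])
              + (3/4 : ℝ) * ((inner ℝ (b j) (b k) : ℝ) * T ![b i, b j, b k, b i])
              + (1/4 : ℝ) * ((inner ℝ (J (b i)) (b k) : ℝ) * T ![b i, b j, b k, J (b j)])
              + (-(1/4 : ℝ)) * ((inner ℝ (J (b j)) (b k) : ℝ) * T ![b i, b j, b k, J (b i)])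
              + ((1/2 : ℝ) * (inner ℝ (J (b i)) (b j) : ℝ)) * T ![b i, b j, b k, J (b k)]) := by
            refine Finset.sum_congr rfl fun k _ => ?_
            rw [hk k]; ring
        _ = _ := by
            simp only [Finset.sum_add_distrib, ← Finset.mul_sum]
            rw [con3 (b i) (b j) (b j) (b i), con3 (b i) (b j) (b i) (b j),
              con3 (b i) (b j) (J (b j)) (J (b i)), con3 (b i) (b j) (J (b i)) (J (b j))]
            ring
    calc (∑ j, ∑ k, ∑ l,
        (ICfun (b i) (b j) (b k) (b l) - Ifun (b i) (b j) (b k) (b l)) *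
          T ![b i, b j, b k, b l])
        = ∑ j, ((-(3/4 : ℝ) * T ![b i, b j, b i, b j]
            + (3/4 : ℝ) * T ![b i, b j, b j, b i]
            + (1/4 : ℝ) * T ![b i, b j, J (b i), J (b j)]
            - (1/4 : ℝ) * T ![b i, b j, J (b j), J (b i)])
            + (1/2 : ℝ) * ((inner ℝ (J (b i)) (b j) : ℝ) *
                ∑ k, T ![b i, b j, b k, J (b k)])) := by
          refine Finset.sum_congr rfl fun j _ => ?_
          rw [hjk j]; ring
      _ = (∑ j, (-(3/4 : ℝ) * T ![b i, b j, b i, b j]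
            + (3/4 : ℝ) * T ![b i, b j, b j, b i]
            + (1/4 : ℝ) * T ![b i, b j, J (b i), J (b j)]
            - (1/4 : ℝ) * T ![b i, b j, J (b j), J (b i)]))
          + (1/2 : ℝ) * ∑ j, T ![b i, J (b i), b j, J (b j)] := by
          rw [Finset.sum_add_distrib, ← Finset.mul_sum, con2sum (b i) (J (b i))]
      _ = _ := by
          rw [Finset.mul_sum, ← Finset.sum_add_distrib]
  have hTcM : ∀ w1 w2 w3 w4 : V,
      Tc ![(1:ℂ) ⊗ₜ[ℝ] w1, (1:ℂ) ⊗ₜ[ℝ] w2, (1:ℂ) ⊗ₜ[ℝ] w3, (1:ℂ) ⊗ₜ[ℝ] w4]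
        = ((T ![w1,w2,w3,w4] : ℝ) : ℂ) := by
    intro w1 w2 w3 w4
    rw [← hTc ![w1,w2,w3,w4]]
    congr 1
    ext i
    fin_cases i <;> rfl
  have H1 : ∀ X Y Z W : V, ((T ![X,Y,Z,W] : ℝ) : ℂ) = -((T ![Y,X,Z,W] : ℝ) : ℂ) := by
    intro X Y Z W; exact_mod_cast hT1 X Y Z W
  have H2 : ∀ X Y Z W : V, ((T ![X,Y,Z,W] : ℝ) : ℂ) = -((T ![X,Y,W,Z] : ℝ) : ℂ) := by
    intro X Y Z W; exact_mod_cast hT2 X Y Z W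
  have H3 : ∀ X Y Z W : V, ((T ![X,Y,Z,W] : ℝ) : ℂ) = ((T ![Z,W,X,Y] : ℝ) : ℂ) := by
    intro X Y Z W; exact_mod_cast hT3 X Y Z W
  have HB : ∀ X Y Z W : V, ((T ![X,Y,Z,W] : ℝ) : ℂ) + ((T ![Y,Z,X,W] : ℝ) : ℂ)
      + ((T ![Z,X,Y,W] : ℝ) : ℂ) = 0 := by
    intro X Y Z W; exact_mod_cast hTbianchi X Y Z W
  have h2c : ((Real.sqrt 2 : ℝ) : ℂ) * ((Real.sqrt 2 : ℝ) : ℂ) = 2 := by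
    norm_cast
    exact Real.mul_self_sqrt (by norm_num)
  have hsinv : ((Real.sqrt 2 : ℝ) : ℂ)⁻¹ * ((Real.sqrt 2 : ℝ) : ℂ)⁻¹ = 2⁻¹ := by
    rw [← mul_inv, h2c]
  have hs4 : ((((Real.sqrt 2 : ℝ) : ℂ)⁻¹ * ((Real.sqrt 2 : ℝ) : ℂ)⁻¹)
        * ((Real.sqrt 2 : ℝ) : ℂ)⁻¹) * ((Real.sqrt 2 : ℝ) : ℂ)⁻¹ = (4:ℂ)⁻¹ := by
    calc ((((Real.sqrt 2 : ℝ) : ℂ)⁻¹ * ((Real.sqrt 2 : ℝ) : ℂ)⁻¹)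
        * ((Real.sqrt 2 : ℝ) : ℂ)⁻¹) * ((Real.sqrt 2 : ℝ) : ℂ)⁻¹
        = (((Real.sqrt 2 : ℝ) : ℂ)⁻¹ * ((Real.sqrt 2 : ℝ) : ℂ)⁻¹)
          * (((Real.sqrt 2 : ℝ) : ℂ)⁻¹ * ((Real.sqrt 2 : ℝ) : ℂ)⁻¹) := by ring
      _ = (2:ℂ)⁻¹ * (2:ℂ)⁻¹ := by rw [hsinv]
      _ = (4:ℂ)⁻¹ := by norm_num
  have hI2 : (Complex.I)^2 = -1 := Complex.I_sq
  have hI3 : (Complex.I)^3 = -Complex.I := by rw [pow_succ, hI2]; ring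
  have hI4 : (Complex.I)^4 = 1 := by rw [pow_succ, hI3, neg_mul, Complex.I_mul_I, neg_neg]
  rw [hL]
  push_cast
  simp only [Fintype.sum_sum_type, hb]
  simp only [Finset.mul_sum]
  simp only [← Finset.sum_add_distrib]
  refine Finset.sum_congr rfl fun k _ => Finset.sum_congr rfl fun l _ => ?_
  simp only [ζ, ζbar]
  rw [m4smul0, m4smul1, m4smul2, m4smul3, smul_smul, smul_smul, smul_smul, hs4, smul_eq_mul]
  simp only [hJ2, m4neg0, m4neg1, m4neg2, m4neg3, Complex.ofReal_neg]
  simp only [m4sub0, m4sub1, m4sub2, m4sub3, m4add0, m4add1, m4add2, m4add3,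
    m4smul0, m4smul1, m4smul2, m4smul3, smul_eq_mul, hTcM]
  set u := b (Sum.inl k)
  set v := b (Sum.inl l)
  ring_nf
  simp only [hI2, hI3, hI4]
  linear_combination ((3 : ℂ)/4) * H2 u v u v + ((3 : ℂ)/2) * Complex.I * H3 u v u (J v) + ((3 : ℂ)/2) * Complex.I * H3 u v (J u) v + ((-3 : ℂ)/2) * H1 u v (J u) (J v) + ((-5 : ℂ)/4) * H2 u v (J u) (J v) + ((5 : ℂ)/4) * H3 u v (J u) (J v) + ((1 : ℂ)/4) * HB u v (J u) (J v) + (1 : ℂ) * HB u v (J v) (J u) + ((-3 : ℂ)/4) * H1 u (J u) v (J v) + (-1 : ℂ) * H2 u (J u) v (J v) + (1 : ℂ) * H3 u (J u) v (J v) + ((5 : ℂ)/4) * HB u (J u) v (J v) + ((1 : ℂ)/2) * H1 u (J u) (J v) v + ((3 : ℂ)/4) * Complex.I * H2 u (J u) (J v) (J v) + ((-3 : ℂ)/2) * Complex.I * HB u (J u) (J v) (J v) + ((3 : ℂ)/4) * H2 u (J v) u (J v) + (-1 : ℂ) * H1 u (J v) v (J u) + ((5 : ℂ)/4) * H2 u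 (J v) v (J u) + ((3 : ℂ)/2) * Complex.I * H1 u (J v) (J u) (J v) + ((1 : ℂ)/4) * H3 v u (J u) (J v) + ((-3 : ℂ)/8) * H1 v v (J u) (J u) + ((3 : ℂ)/4) * HB v v (J u) (J u) + ((-1 : ℂ)/4) * H2 v (J u) u (J v) + ((-3 : ℂ)/4) * H2 v (J u) v (J u) + ((3 : ℂ)/4) * H1 v (J u) (J u) v + ((1 : ℂ)/4) * H1 v (J u) (J v) u + ((3 : ℂ)/2) * Complex.I * H3 (J u) v (J u) (J v) + ((3 : ℂ)/4) * H2 (J u) (J v) (J u) (J v)
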